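/- For every K > 0 and β ∈ (0,1) there exists δ₀ ∈ (0,1] such that the following holds for every δ ∈ (0,δ₀] and every c ∈ (0,1]. Suppose u : [−δ,δ] × [0,δ] → ℝ is continuous, is C² on the open rectangle (−δ,δ) × (0,δ), and satisfies the minimal-surface-graph equation 𝓕(u) = 0 there; suppose moreover that on (−δ,δ) × (0,δ) one has |u(s,x)| ≤ K x², |∂_s u(s,x)| ≤ K x, |∂_x u(s,x)| ≤ K x, and |∂_{ss}u|, |∂_{sx}u|, |∂_{xx}u| ≤ K; that u(s,0) ≥ 0 for all |s| ≤ δ; and that u(s,x) ≥ c x^{3+β} whenever |s| = δ or x = δ. Then u(s,x) ≥ c x^{3+β} for all (s,x) ∈ [−δ,δ] × [0,δ]. In particular, there is no function u satisfying all these hypotheses which additionally satisfies u(0,x)/x^{3+β} → 0 as x → 0⁺. -/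

import Mathlib

noncomputable section

/-- Partial derivative in the first variable `s`. -/
def pS (u : ℝ × ℝ → ℝ) (p : ℝ × ℝ) : ℝ := deriv (fun t => u (t, p.2)) p.1

/-- Partial derivative in the second variable `x`. -/
def pX (u : ℝ × ℝ → ℝ) (p : ℝ × ℝ) : ℝ := deriv (fun t => u (p.1, t)) p.2

/-- The minimal-surface-graph operator
`𝓕(u) = (1+u_x²)u_{ss} − 2 u_s u_x u_{sx} + (1+u_s²)u_{xx} − (2(1+u_x²+u_s²)/x) u_x`. -/
def Fmin (u : ℝ × ℝ → ℝ) (p : ℝ × ℝ) : ℝ :=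
  (1 + (pX u p) ^ 2) * (pS (pS u) p)
    - 2 * (pS u p) * (pX u p) * (pX (pS u) p)
    + (1 + (pS u p) ^ 2) * (pX (pX u) p)
    - (2 * (1 + (pX u p) ^ 2 + (pS u p) ^ 2) / p.2) * (pX u p)

lemma second_deriv_nonneg_of_isLocalMin {f : ℝ → ℝ} {s : Set ℝ} {a : ℝ}
    (hs : IsOpen s) (ha : a ∈ s) (hf : ContDiffOn ℝ 2 f s) (hmin : IsLocalMin f a) :
    0 ≤ deriv (deriv f) a := by
  by_contra hlt
  push_neg at hlt
  have hdiff : ∀ x ∈ s, DifferentiableAt ℝ f x := fun x hx =>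
    ((hf.differentiableOn two_ne_zero).differentiableAt (hs.mem_nhds hx))
  have hf' : ContDiffOn ℝ 1 (deriv f) s := hf.deriv_of_isOpen hs (by norm_num)
  have hd'a : DifferentiableAt ℝ (deriv f) a :=
    ((hf'.differentiableOn one_ne_zero).differentiableAt (hs.mem_nhds ha))
  have hderiv0 : deriv f a = 0 := hmin.deriv_eq_zero
  have hslope : Filter.Tendsto (slope (deriv f) a) (nhdsWithin a {a}ᶜ)
      (nhds (deriv (deriv f) a)) := hasDerivAt_iff_tendsto_slope.1 hd'a.hasDerivAt
  have h1 : ∀ᶠ x in nhdsWithin a (Set.Ioi a), slope (deriv f) a x < 0 :=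
    (hslope.mono_left (nhdsWithin_mono _ (fun x hx => ne_of_gt hx))).eventually_lt_const hlt
  have h2 : ∀ᶠ x in nhdsWithin a (Set.Ioi a), deriv f x < 0 := by
    filter_upwards [h1, self_mem_nhdsWithin] with x hx hx'
    rw [slope_def_field, hderiv0, sub_zero] at hx
    have hxa : (0:ℝ) < x - a := sub_pos.2 hx'
    have := mul_neg_of_neg_of_pos hx hxa
    rwa [div_mul_cancel₀ _ (ne_of_gt hxa)] at this
  have h3 : ∀ᶠ x in nhdsWithin a (Set.Ioi a), f a ≤ f x := hmin.filter_mono nhdsWithin_le_nhds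
  have h4 : ∀ᶠ x in nhdsWithin a (Set.Ioi a), x ∈ s :=
    eventually_nhdsWithin_of_eventually_nhds (hs.eventually_mem ha)
  obtain ⟨b, hb, hsub⟩ :=
    mem_nhdsGT_iff_exists_Ioc_subset.1 (h2.and (h3.and h4))
  have hanti : StrictAntiOn f (Set.Icc a b) := by
    apply strictAntiOn_of_deriv_neg (convex_Icc a b)
    · intro x hx
      rcases eq_or_lt_of_le hx.1 with h | h
      · subst h
        exact (hdiff a ha).continuousAt.continuousWithinAt
      · exact ((hdiff x (hsub ⟨h, hx.2⟩).2.2).continuousAt).continuousWithinAt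
    · intro x hx
      rw [interior_Icc] at hx
      exact (hsub ⟨hx.1, le_of_lt hx.2⟩).1
  have hba : f b < f a := hanti ⟨le_refl a, le_of_lt hb⟩ ⟨le_of_lt hb, le_refl b⟩ hb
  exact absurd (hsub ⟨hb, le_refl b⟩).2.1 (not_le.2 hba)

set_option maxHeartbeats 1000000 in
theorem barrier_estimate_minimal_graph :
    ∀ K > (0 : ℝ), ∀ β ∈ Set.Ioo (0 : ℝ) 1, ∃ δ₀ ∈ Set.Ioc (0 : ℝ) 1,
      ∀ δ ∈ Set.Ioc (0 : ℝ) δ₀, ∀ c ∈ Set.Ioc (0 : ℝ) 1,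
        ∀ u : ℝ × ℝ → ℝ,
          ContinuousOn u (Set.Icc (-δ) δ ×ˢ Set.Icc 0 δ) →
          ContDiffOn ℝ 2 u (Set.Ioo (-δ) δ ×ˢ Set.Ioo 0 δ) →
          (∀ p ∈ Set.Ioo (-δ) δ ×ˢ Set.Ioo 0 δ, Fmin u p = 0) →
          (∀ p ∈ Set.Ioo (-δ) δ ×ˢ Set.Ioo 0 δ,
            |u p| ≤ K * p.2 ^ 2 ∧ |pS u p| ≤ K * p.2 ∧ |pX u p| ≤ K * p.2 ∧
            |pS (pS u) p| ≤ K ∧ |pX (pS u) p| ≤ K ∧ |pX (pX u) p| ≤ K) →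
          (∀ s ∈ Set.Icc (-δ) δ, 0 ≤ u (s, 0)) →
          (∀ p ∈ Set.Icc (-δ) δ ×ˢ Set.Icc 0 δ, (|p.1| = δ ∨ p.2 = δ) →
            c * p.2 ^ (3 + β) ≤ u p) →
          (∀ p ∈ Set.Icc (-δ) δ ×ˢ Set.Icc 0 δ, c * p.2 ^ (3 + β) ≤ u p) ∧
          ¬ Filter.Tendsto (fun x : ℝ => u (0, x) / x ^ (3 + β))
              (nhdsWithin 0 (Set.Ioi 0)) (nhds 0) := by
  intro K hK β hβ
  obtain ⟨hβ0, hβ1⟩ := hβ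
  have hsβ : 0 < Real.sqrt β := Real.sqrt_pos.2 hβ0
  refine ⟨min 1 (Real.sqrt β / (2*K)), ⟨lt_min one_pos (by positivity), min_le_left _ _⟩, ?_⟩
  rintro δ ⟨hδ0, hδ₀⟩ c ⟨hc0, hc1⟩ u hcont hC2 hpde hbnd hbot hedge
  have hδ1 : δ ≤ 1 := le_trans hδ₀ (min_le_left _ _)
  have hδK : K * δ ≤ Real.sqrt β / 2 := by
    have h := le_trans hδ₀ (min_le_right _ _)
    calc K * δ ≤ K * (Real.sqrt β/(2*K)) := by nlinarith
    _ = Real.sqrt β / 2 := by field_simp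
  have h3β0 : (0:ℝ) < 3 + β := by linarith
  set R := Set.Icc (-δ) δ ×ˢ Set.Icc 0 δ with hR
  set O := Set.Ioo (-δ) δ ×ˢ Set.Ioo 0 δ with hO
  have hOopen : IsOpen O := isOpen_Ioo.prod isOpen_Ioo
  have hOR : O ⊆ R := Set.prod_mono Set.Ioo_subset_Icc_self Set.Ioo_subset_Icc_self
  set v : ℝ × ℝ → ℝ := fun p => u p - c * p.2 ^ (3 + β) with hv
  have hbarcont : Continuous fun p : ℝ × ℝ => c * p.2 ^ (3 + β) := by
    apply continuous_const.mul
    exact (continuous_iff_continuousAt.2 fun x =>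
      Real.continuousAt_rpow_const x (3+β) (Or.inr h3β0.le)).comp continuous_snd
  have hvcont : ContinuousOn v R := hcont.sub hbarcont.continuousOn
  have hRc : IsCompact R := isCompact_Icc.prod isCompact_Icc
  have hRne : R.Nonempty := ⟨(0, 0), by
    simp only [hR, Set.mem_prod, Set.mem_Icc]
    refine ⟨⟨by linarith, hδ0.le⟩, le_refl 0, hδ0.le⟩⟩
  obtain ⟨p₀, hp₀R, hp₀min⟩ := hRc.exists_isMinOn hRne hvcont
  obtain ⟨s₀, x₀⟩ := p₀
  have main : ∀ p ∈ R, c * p.2 ^ (3 + β) ≤ u p := by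
    by_cases hneg : 0 ≤ v (s₀, x₀)
    · intro p hp
      have h2 := isMinOn_iff.1 hp₀min p hp
      have : v (s₀, x₀) ≤ u p - c * p.2 ^ (3+β) := h2
      linarith
    · exfalso
      push_neg at hneg
      have hp₀R' := hp₀R
      simp only [hR, Set.mem_prod, Set.mem_Icc] at hp₀R'
      obtain ⟨⟨hs₀l, hs₀r⟩, hx₀l, hx₀r⟩ := hp₀R'
      -- x₀ ≠ 0
      have hx0ne : x₀ ≠ 0 := by
        rintro rfl
        have hz : v (s₀, 0) = u (s₀, 0) := by
          simp [hv, Real.zero_rpow (ne_of_gt h3β0)]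
        rw [hz] at hneg
        exact absurd (hbot s₀ ⟨hs₀l, hs₀r⟩) (not_le.2 hneg)
      have hnedge : ¬(|s₀| = δ ∨ x₀ = δ) := by
        intro h
        have := hedge (s₀, x₀) hp₀R h
        have : (0:ℝ) ≤ v (s₀, x₀) := by simp only [hv]; linarith [this]
        linarith
      push_neg at hnedge
      obtain ⟨habs, hxne⟩ := hnedge
      have hs₀ : s₀ ∈ Set.Ioo (-δ) δ := by
        constructor
        · rcases eq_or_lt_of_le hs₀l with h | h
          · exact absurd (by rw [← h, abs_neg, abs_of_nonneg hδ0.le]) habs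
          · exact h
        · rcases eq_or_lt_of_le hs₀r with h | h
          · exact absurd (by rw [h, abs_of_nonneg hδ0.le]) habs
          · exact h
      have hx₀ : x₀ ∈ Set.Ioo (0:ℝ) δ :=
        ⟨lt_of_le_of_ne hx₀l (Ne.symm hx0ne), lt_of_le_of_ne hx₀r hxne⟩
      have hx₀0 : (0:ℝ) < x₀ := hx₀.1
      have hpO : (s₀, x₀) ∈ O := ⟨hs₀, hx₀⟩
      -- local min
      have hRn : R ∈ nhds (s₀, x₀) := mem_nhds_iff.2 ⟨O, hOR, hOopen, hpO⟩
      have hlocal : IsLocalMin v (s₀, x₀) := hp₀min.isLocalMin hRn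
      -- s-direction
      have hgmin : IsLocalMin (fun t => u (t, x₀) - c * x₀ ^ (3+β)) s₀ :=
        IsLocalMin.comp_continuous (f := v) (g := fun t : ℝ => (t, x₀)) (b := s₀)
          hlocal (Continuous.prodMk_left x₀).continuousAt
      have hJ : IsOpen (Set.Ioo (-δ) δ) := isOpen_Ioo
      have hgC2 : ContDiffOn ℝ 2 (fun t => u (t, x₀)) (Set.Ioo (-δ) δ) :=
        hC2.comp ((contDiff_id.prodMk contDiff_const).contDiffOn) (fun t ht => ⟨ht, hx₀⟩)
      have hgsubC2 : ContDiffOn ℝ 2 (fun t => u (t, x₀) - c * x₀ ^ (3+β)) (Set.Ioo (-δ) δ) :=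
        hgC2.sub contDiffOn_const
      have hS0 : 0 ≤ deriv (deriv (fun t => u (t, x₀) - c * x₀ ^ (3+β))) s₀ :=
        second_deriv_nonneg_of_isLocalMin hJ hs₀ hgsubC2 hgmin
      have hds : (deriv fun t => u (t, x₀) - c * x₀ ^ (3+β)) = deriv fun t => u (t, x₀) :=
        funext fun y => deriv_sub_const _
      rw [hds] at hS0
      have hpS0 : pS u (s₀, x₀) = 0 := by
        have h1 : deriv (fun t => u (t, x₀) - c * x₀ ^ (3+β)) s₀ = 0 := hgmin.deriv_eq_zero
        rw [deriv_sub_const] at h1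
        exact h1
      have hpSS : pS (pS u) (s₀, x₀) = deriv (deriv fun t => u (t, x₀)) s₀ := rfl
      -- x-direction
      have hhmin : IsLocalMin (fun t => u (s₀, t) - c * t ^ (3+β)) x₀ :=
        IsLocalMin.comp_continuous (f := v) (g := fun t : ℝ => (s₀, t)) (b := x₀)
          hlocal (Continuous.prodMk_right s₀).continuousAt
      have hI : IsOpen (Set.Ioo (0:ℝ) δ) := isOpen_Ioo
      have hhC2 : ContDiffOn ℝ 2 (fun t => u (s₀, t)) (Set.Ioo (0:ℝ) δ) :=
        hC2.comp ((contDiff_const.prodMk contDiff_id).contDiffOn) (fun t ht => ⟨hs₀, ht⟩)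
      have hwC2 : ContDiffOn ℝ 2 (fun t : ℝ => c * t ^ (3+β)) (Set.Ioo (0:ℝ) δ) :=
        fun y hy => (contDiffAt_const.mul
          (Real.contDiffAt_rpow_const_of_ne (ne_of_gt hy.1))).contDiffWithinAt
      have hfC2 : ContDiffOn ℝ 2 (fun t => u (s₀, t) - c * t ^ (3+β)) (Set.Ioo (0:ℝ) δ) :=
        hhC2.sub hwC2
      have hX0 : 0 ≤ deriv (deriv (fun t => u (s₀, t) - c * t ^ (3+β))) x₀ :=
        second_deriv_nonneg_of_isLocalMin hI hx₀ hfC2 hhmin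
      have hf0 : deriv (fun t => u (s₀, t) - c * t ^ (3+β)) x₀ = 0 := hhmin.deriv_eq_zero
      have hdiffh : ∀ y ∈ Set.Ioo (0:ℝ) δ, DifferentiableAt ℝ (fun t => u (s₀, t)) y :=
        fun y hy => (hhC2.differentiableOn two_ne_zero).differentiableAt (hI.mem_nhds hy)
      have hwd : ∀ y ∈ Set.Ioo (0:ℝ) δ,
          HasDerivAt (fun t : ℝ => c * t ^ (3+β)) (c * ((3+β) * y ^ (2+β))) y := by
        intro y hy
        have h' := (Real.hasDerivAt_rpow_const (x := y) (p := 3+β)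
          (Or.inl (ne_of_gt hy.1))).const_mul c
        rwa [show (3:ℝ)+β-1 = 2+β by ring] at h'
      have hEq : ∀ y ∈ Set.Ioo (0:ℝ) δ,
          deriv (fun t => u (s₀, t) - c * t ^ (3+β)) y
            = deriv (fun t => u (s₀, t)) y - c * ((3+β) * y ^ (2+β)) := by
        intro y hy
        rw [deriv_fun_sub (hdiffh y hy) (hwd y hy).differentiableAt, (hwd y hy).deriv]
      have hB : deriv (fun t => u (s₀, t)) x₀ = c * ((3+β) * x₀ ^ (2+β)) := by
        have h1 := hEq x₀ hx₀
        rw [hf0] at h1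
        linarith
      have hEq' : (deriv fun t => u (s₀, t) - c * t ^ (3+β))
          =ᶠ[nhds x₀] fun y => deriv (fun t => u (s₀, t)) y - c * ((3+β) * y ^ (2+β)) := by
        filter_upwards [hI.mem_nhds hx₀] with y hy using hEq y hy
      have hdh' : DifferentiableAt ℝ (deriv fun t => u (s₀, t)) x₀ :=
        ((hhC2.deriv_of_isOpen (m := 1) hI (by norm_num)).differentiableOn one_ne_zero).differentiableAt
          (hI.mem_nhds hx₀)
      have hw2 : HasDerivAt (fun y : ℝ => c * ((3+β) * y ^ (2+β)))
          (c * ((3+β) * ((2+β) * x₀ ^ (1+β)))) x₀ := by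
        have h' := ((Real.hasDerivAt_rpow_const (x := x₀) (p := 2+β)
          (Or.inl (ne_of_gt hx₀0))).const_mul (3+β)).const_mul c
        rwa [show (2:ℝ)+β-1 = 1+β by ring] at h'
      have hXlow : 0 ≤ deriv (deriv fun t => u (s₀, t)) x₀
          - c * ((3+β) * ((2+β) * x₀ ^ (1+β))) := by
        have h1 := hEq'.deriv_eq
        rw [h1, deriv_fun_sub hdh' hw2.differentiableAt, hw2.deriv] at hX0
        exact hX0
      have hpX : pX u (s₀, x₀) = deriv (fun t => u (s₀, t)) x₀ := rfl
      have hpXX : pX (pX u) (s₀, x₀) = deriv (deriv fun t => u (s₀, t)) x₀ := rfl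
      -- PDE at the minimum
      have hpde' := hpde (s₀, x₀) hpO
      rw [Fmin] at hpde'
      rw [hpS0, hpSS, hpX, hpXX] at hpde'
      -- bound on the gradient
      have hBb := (hbnd (s₀, x₀) hpO).2.2.1
      rw [hpX] at hBb
      -- algebra
      set B := deriv (fun t => u (s₀, t)) x₀ with hBdef
      set S := deriv (deriv fun t => u (t, x₀)) s₀ with hSdef
      set X := deriv (deriv fun t => u (s₀, t)) x₀ with hXdef
      set P := x₀ ^ ((1:ℝ)+β) with hPdef
      have hP : 0 < P := Real.rpow_pos_of_pos hx₀0 _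
      have hQ : x₀ ^ ((2:ℝ)+β) = x₀ * P := by
        rw [hPdef, show (2:ℝ)+β = 1 + (1+β) by ring, Real.rpow_add hx₀0, Real.rpow_one]
      have hB' : B = c * ((3+β) * (x₀ * P)) := by rw [hB, hQ]
      have hBsq : B^2 ≤ β/4 := by
        have hKx : K * x₀ ≤ K * δ := by nlinarith [hx₀.2.le]
        have h2 : |B| ≤ Real.sqrt β / 2 := le_trans hBb (le_trans hKx hδK)
        have h3 : B^2 ≤ (Real.sqrt β / 2)^2 := by
          rw [← sq_abs]
          exact pow_le_pow_left₀ (abs_nonneg B) h2 2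
        have h4 : (Real.sqrt β / 2)^2 = β/4 := by
          rw [div_pow, Real.sq_sqrt hβ0.le]; norm_num
        linarith
      -- simplify the PDE
      have key : 2 * (1 + B^2 + 0^2) / (s₀, x₀).2 * B = 2 * (1 + B^2) * (c * ((3+β) * P)) := by
        show 2 * (1 + B^2 + 0^2) / x₀ * B = _
        rw [hB']
        field_simp
        ring
      rw [key] at hpde'
      -- hpde' : (1+B²)*S - 2*0*B*M + (1+0²)*X - 2(1+B²)(c(3+β)P) = 0
      have hT : 0 < c * ((3+β) * P) := by positivity
      have h5 : 0 ≤ (1 + B^2) * S := mul_nonneg (by positivity) hS0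
      have hXle : X ≤ 2 * (1 + B^2) * (c * ((3+β) * P)) := by nlinarith [h5]
      have hX1 : (2 + β) * (c * ((3+β) * P)) ≤ X := by nlinarith [hXlow]
      have h6 : 2 * (1 + B^2) ≤ 2 + β/2 := by linarith [hBsq]
      have h7 : 2 * (1 + B^2) * (c * ((3+β) * P)) ≤ (2 + β/2) * (c * ((3+β) * P)) :=
        mul_le_mul_of_nonneg_right h6 hT.le
      have h8 : (2 + β) ≤ 2 + β/2 :=
        (mul_le_mul_iff_of_pos_right hT).1 (le_trans (hX1.trans hXle) h7)
      linarith
  refine ⟨main, ?_⟩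
  intro hT
  have hev : ∀ᶠ x in nhdsWithin 0 (Set.Ioi 0), u (0, x) / x ^ (3+β) < c :=
    hT.eventually_lt_const hc0
  have hev2 : ∀ᶠ x in nhdsWithin (0:ℝ) (Set.Ioi 0), x ∈ Set.Ioo (0:ℝ) δ :=
    Ioo_mem_nhdsGT_of_mem ⟨le_refl 0, hδ0⟩
  obtain ⟨x, hx1, hx2⟩ := (hev.and hev2).exists
  have hxpos : (0:ℝ) < x := hx2.1
  have hmem : ((0:ℝ), x) ∈ R := by
    simp only [hR, Set.mem_prod, Set.mem_Icc]
    exact ⟨⟨by linarith, hδ0.le⟩, hxpos.le, hx2.2.le⟩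
  have hle := main (0, x) hmem
  have hcx : c ≤ u (0, x) / x ^ (3+β) :=
    (le_div_iff₀ (Real.rpow_pos_of_pos hxpos _)).2 hle
  linarith
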